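/- Let G1 and G2 be disjoint connected 3-leaf powers and let H be the join composition adding all edges between S1 ⊆ V(G1) and S2 ⊆ V(G2). If there exists a vertex v of G1 with S1 = N(v) ∪ {v}, and S2 = V(G2) with G2 a clique, then H is a 3-leaf power. -/

import Mathlib

open SimpleGraph

/-- The bull: a triangle `0,1,2` with pendant vertices `3` (on `1`) and `4` (on `2`). -/
def bull : SimpleGraph (Fin 5) :=
  SimpleGraph.fromRel (fun a b => (a, b) ∈ ([(0,1),(0,2),(1,2),(1,3),(2,4)] : List (Fin 5 × Fin 5)))

/-- The dart: a diamond `0,1,2,3` (missing edge `(0,1)`) plus a pendant vertex `4`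
adjacent to the degree-3 vertex `2`. -/
def dart : SimpleGraph (Fin 5) :=
  SimpleGraph.fromRel (fun a b => (a, b) ∈ ([(0,2),(0,3),(1,2),(1,3),(2,3),(2,4)] : List (Fin 5 × Fin 5)))

/-- The gem: a path `0-1-2-3` plus a dominating vertex `4`. -/
def gem : SimpleGraph (Fin 5) :=
  SimpleGraph.fromRel (fun a b => (a, b) ∈ ([(0,1),(1,2),(2,3),(0,4),(1,4),(2,4),(3,4)] : List (Fin 5 × Fin 5)))

/-- A graph is a 3-leaf power iff it is {bull, dart, gem, chordless `C≥4`}-free. -/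
def Is3LeafPower {V : Type*} (H : SimpleGraph V) : Prop :=
  IsEmpty (bull ↪g H) ∧ IsEmpty (dart ↪g H) ∧ IsEmpty (gem ↪g H) ∧
    ∀ n, 4 ≤ n → IsEmpty (SimpleGraph.cycleGraph n ↪g H)

/-- The join composition `(G1,S1) ⊗ (G2,S2)`: the disjoint union of `G1` and `G2`
together with all edges between `S1` and `S2`. -/
def joinComp {V1 V2 : Type*} (G1 : SimpleGraph V1) (G2 : SimpleGraph V2)
    (S1 : Set V1) (S2 : Set V2) : SimpleGraph (V1 ⊕ V2) :=
  SimpleGraph.fromRel (fun a b =>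
    (∃ x y, a = .inl x ∧ b = .inl y ∧ G1.Adj x y) ∨
    (∃ x y, a = .inr x ∧ b = .inr y ∧ G2.Adj x y) ∨
    (∃ x y, a = .inl x ∧ b = .inr y ∧ x ∈ S1 ∧ y ∈ S2))

/-- Adjacent true twins: adjacent vertices with the same neighbors elsewhere. -/
def ATT {V : Type*} (F : SimpleGraph V) (a b : V) : Prop :=
  F.Adj a b ∧ ∀ z, z ≠ a → z ≠ b → (F.Adj a z ↔ F.Adj b z)

lemma ATT.pullback {V W : Type*} {F : SimpleGraph V} {H : SimpleGraph W} (f : F ↪g H)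
    {a b : V} (h : ATT H (f a) (f b)) : ATT F a b := by
  refine ⟨f.map_adj_iff.mp h.1, fun z hza hzb => ?_⟩
  rw [← f.map_adj_iff, ← f.map_adj_iff]
  exact h.2 (f z) (fun h' => hza (f.injective h')) (fun h' => hzb (f.injective h'))

set_option maxHeartbeats 1000000 in
set_option synthInstance.maxHeartbeats 1000000 in
set_option synthInstance.maxSize 4000 in
lemma noATT_bull : ∀ a b, ¬ ATT bull a b := by
  simp only [ATT, bull, SimpleGraph.fromRel_adj, List.mem_cons, List.not_mem_nil,
    Prod.mk.injEq, or_false]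
  decide

set_option maxHeartbeats 1000000 in
set_option synthInstance.maxHeartbeats 1000000 in
set_option synthInstance.maxSize 4000 in
lemma noATT_dart : ∀ a b, ¬ ATT dart a b := by
  simp only [ATT, dart, SimpleGraph.fromRel_adj, List.mem_cons, List.not_mem_nil,
    Prod.mk.injEq, or_false]
  decide

set_option maxHeartbeats 1000000 in
set_option synthInstance.maxHeartbeats 1000000 in
set_option synthInstance.maxSize 4000 in
lemma noATT_gem : ∀ a b, ¬ ATT gem a b := by
  simp only [ATT, gem, SimpleGraph.fromRel_adj, List.mem_cons, List.not_mem_nil,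
    Prod.mk.injEq, or_false]
  decide

open Fin.NatCast Fin.CommRing in
lemma noATT_cycle (n : ℕ) (hn : 4 ≤ n) : ∀ a b, ¬ ATT (cycleGraph n) a b := by
  obtain ⟨m, rfl⟩ : ∃ m, n = m + 2 := ⟨n - 2, by omega⟩
  have hcast : ∀ k : ℕ, k < m + 2 → ((k : Fin (m + 2)) : ℕ) = k := fun k hk =>
    Fin.val_cast_of_lt hk
  have h2 : ((2 : ℕ) : Fin (m + 2)) ≠ 0 := by
    intro h
    have := congrArg Fin.val h
    rw [hcast 2 (by omega)] at this
    simp at this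
  have h3 : ((3 : ℕ) : Fin (m + 2)) ≠ 0 := by
    intro h
    have := congrArg Fin.val h
    rw [hcast 3 (by omega)] at this
    simp at this
  have h1 : ((1 : ℕ) : Fin (m + 2)) ≠ 0 := by
    intro h
    have := congrArg Fin.val h
    rw [hcast 1 (by omega)] at this
    simp at this
  have key : ∀ a b : Fin (m + 2), b - a = 1 → ¬ ATT (cycleGraph (m + 2)) a b := by
    rintro a b hba ⟨hadj, htw⟩
    have hb : b = a + 1 := by rw [← hba]; ring
    subst hb
    have hz := htw (a + 1 + 1) ?_ ?_
    · rw [cycleGraph_adj, cycleGraph_adj] at hz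
      have := hz.mpr (Or.inr (by ring))
      rcases this with h | h
      · apply h3
        have : ((3:ℕ) : Fin (m+2)) = 0 := by push_cast; linear_combination -h
        exact this
      · apply h1
        have : ((1:ℕ) : Fin (m+2)) = 0 := by push_cast; linear_combination h
        exact this
    · intro hc
      apply h2
      have : ((2:ℕ) : Fin (m+2)) = 0 := by push_cast; linear_combination hc
      exact this
    · intro hc
      apply h1
      have : ((1:ℕ) : Fin (m+2)) = 0 := by push_cast; linear_combination hc
      exact this
  intro a b h
  have hadj := h.1
  rw [cycleGraph_adj] at hadj
  rcases hadj with hab | hab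
  · exact key b a hab ⟨h.1.symm, fun z hz1 hz2 => (h.2 z hz2 hz1).symm⟩
  · exact key a b hab h

section Main

variable {V1 V2 : Type*} {G1 : SimpleGraph V1} {G2 : SimpleGraph V2} {S1 : Set V1}
  {S2 : Set V2} {v : V1}

lemma joinComp_adj_ll (x y : V1) :
    (joinComp G1 G2 S1 S2).Adj (.inl x) (.inl y) ↔ G1.Adj x y := by
  simp only [joinComp, SimpleGraph.fromRel_adj]
  constructor
  · rintro ⟨hne, h | h⟩ <;> simp_all [SimpleGraph.adj_comm]
  · intro h; exact ⟨by simp [h.ne], by simp [h]⟩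

lemma joinComp_adj_rr (x y : V2) :
    (joinComp G1 G2 S1 S2).Adj (.inr x) (.inr y) ↔ G2.Adj x y := by
  simp only [joinComp, SimpleGraph.fromRel_adj]
  constructor
  · rintro ⟨hne, h | h⟩ <;> simp_all [SimpleGraph.adj_comm]
  · intro h; exact ⟨by simp [h.ne], by simp [h]⟩

lemma joinComp_adj_lr (x : V1) (y : V2) :
    (joinComp G1 G2 S1 S2).Adj (.inl x) (.inr y) ↔ x ∈ S1 ∧ y ∈ S2 := by
  simp [joinComp, SimpleGraph.fromRel_adj]

lemma joinComp_free (hv : S1 = {x | G1.Adj v x} ∪ {v})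
    (hcl2 : G2.IsClique Set.univ)
    {V3 : Type*} (F : SimpleGraph V3) (hF1 : IsEmpty (F ↪g G1))
    (hno : ∀ a b, ¬ ATT F a b) :
    IsEmpty (F ↪g (joinComp G1 G2 S1 (Set.univ : Set V2))) := by
  constructor
  intro f
  set H := joinComp G1 G2 S1 (Set.univ : Set V2) with hH
  have hll : ∀ x y, H.Adj (.inl x) (.inl y) ↔ G1.Adj x y := fun x y => joinComp_adj_ll x y
  have hrr : ∀ x y, H.Adj (.inr x) (.inr y) ↔ x ≠ y := by
    intro x y
    rw [hH, joinComp_adj_rr]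
    exact ⟨fun h => h.ne, fun h => hcl2 trivial trivial h⟩
  have hlr : ∀ (x : V1) (y : V2), H.Adj (.inl x) (.inr y) ↔ x ∈ S1 := by
    intro x y; rw [hH, joinComp_adj_lr]; simp
  have hvS1 : v ∈ S1 := by rw [hv]; right; rfl
  have hmemS1 : ∀ x : V1, x ≠ v → (x ∈ S1 ↔ G1.Adj x v) := by
    intro x hx
    rw [hv]
    simp only [Set.mem_union, Set.mem_setOf_eq, Set.mem_singleton_iff]
    constructor
    · rintro (h | h)
      · exact h.symm
      · exact absurd h hx
    · intro h; exact Or.inl h.symm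
  -- twin facts
  have twinRR : ∀ y y' : V2, y ≠ y' → ATT H (.inr y) (.inr y') := by
    intro y y' hne
    refine ⟨(hrr _ _).mpr hne, fun z hz1 hz2 => ?_⟩
    rcases z with x | y''
    · rw [H.adj_comm, hlr, H.adj_comm, hlr]
    · rw [hrr, hrr]
      constructor
      · intro _; exact fun h => hz2 (by rw [h])
      · intro _; exact fun h => hz1 (by rw [h])
  have twinLR : ∀ y : V2, ATT H (.inl v) (.inr y) := by
    intro y
    refine ⟨(hlr _ _).mpr hvS1, fun z hz1 hz2 => ?_⟩
    rcases z with x | y''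
    · have hx : x ≠ v := fun h => hz1 (by rw [h])
      rw [H.adj_comm, hll, H.adj_comm, hlr, hmemS1 x hx, G1.adj_comm]
    · rw [hlr, hrr]
      constructor
      · intro _; exact fun h => hz2 (by rw [h])
      · intro _; exact hvS1
  -- Case 1: two vertices map to the right side with distinct images
  by_cases hcase1 : ∃ a b y y', f a = .inr y ∧ f b = .inr y' ∧ y ≠ y'
  · obtain ⟨a, b, y, y', ha, hb, hyy⟩ := hcase1
    refine hno a b (ATT.pullback f ?_)
    rw [ha, hb]
    exact twinRR y y' hyy
  -- Case 2: some vertex maps right and some vertex maps to `inl v`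
  by_cases hcase2 : ∃ a b y, f a = .inl v ∧ f b = .inr y
  · obtain ⟨a, b, y, ha, hb⟩ := hcase2
    refine hno a b (ATT.pullback f ?_)
    rw [ha, hb]
    exact twinLR y
  -- Otherwise: replace the (at most one) right vertex by `v`
  push_neg at hcase1 hcase2
  have huniq : ∀ a b y y', f a = .inr y → f b = .inr y' → y = y' := by
    intro a b y y' ha hb
    by_contra hne
    exact hne (hcase1 a b y y' ha hb)
  have hnov : ∀ a y b, f b = .inr y → f a ≠ .inl v := by
    intro a y b hb ha
    exact (hcase2 a b y ha) hb
  set g : V3 → V1 := fun x => Sum.elim id (fun _ => v) (f x) with hg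
  have hgl : ∀ x u, f x = .inl u → g x = u := by
    intro x u h; simp [hg, h]
  have hgr : ∀ x y, f x = .inr y → g x = v := by
    intro x y h; simp [hg, h]
  have hginj : Function.Injective g := by
    intro x x' h
    rcases hfx : f x with u | y <;> rcases hfx' : f x' with u' | y'
    · rw [hgl x u hfx, hgl x' u' hfx'] at h
      exact f.injective (by rw [hfx, hfx', h])
    · rw [hgl x u hfx, hgr x' y' hfx'] at h
      exact absurd (hfx.trans (by rw [h])) (hnov x y' x' hfx')
    · rw [hgr x y hfx, hgl x' u' hfx'] at h
      exact absurd (hfx'.trans (by rw [← h])) (hnov x' y x hfx)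
    · exact f.injective (by rw [hfx, hfx', huniq x x' y y' hfx hfx'])
  have hgadj : ∀ x x', G1.Adj (g x) (g x') ↔ F.Adj x x' := by
    intro x x'
    rw [← f.map_adj_iff]
    rcases hfx : f x with u | y <;> rcases hfx' : f x' with u' | y'
    · rw [hgl x u hfx, hgl x' u' hfx']
      exact (hll u u').symm
    · have hu : u ≠ v := fun h => hnov x y' x' hfx' (by rw [hfx, h])
      rw [hgl x u hfx, hgr x' y' hfx', hlr, hmemS1 u hu]
    · have hu : u' ≠ v := fun h => hnov x' y x hfx (by rw [hfx', h])
      rw [hgr x y hfx, hgl x' u' hfx', H.adj_comm, hlr, hmemS1 u' hu]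
      exact G1.adj_comm v u'
    · have hyy : y = y' := huniq x x' y y' hfx hfx'
      subst hyy
      rw [hgr x y hfx, hgr x' y hfx']
      simp [SimpleGraph.irrefl]
  exact hF1.false ⟨⟨g, hginj⟩, hgadj _ _⟩

end Main

theorem joinComp_threeLeafPower_of_closedNbhd {V1 V2 : Type*}
    (G1 : SimpleGraph V1) (G2 : SimpleGraph V2)
    (h1 : G1.Connected) (h2 : G2.Connected)
    (hL1 : Is3LeafPower G1) (hL2 : Is3LeafPower G2)
    (S1 : Set V1) (S2 : Set V2) (hS1 : S1.Nonempty) (hS2 : S2.Nonempty)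
    (hv : ∃ v : V1, S1 = {x | G1.Adj v x} ∪ {v})
    (hS2univ : S2 = Set.univ) (hcl2 : G2.IsClique Set.univ) :
    Is3LeafPower (joinComp G1 G2 S1 S2) := by
  subst hS2univ
  obtain ⟨v, hv⟩ := hv
  exact ⟨joinComp_free hv hcl2 bull hL1.1 noATT_bull,
    joinComp_free hv hcl2 dart hL1.2.1 noATT_dart,
    joinComp_free hv hcl2 gem hL1.2.2.1 noATT_gem,
    fun n hn => joinComp_free hv hcl2 (cycleGraph n) (hL1.2.2.2 n hn) (noATT_cycle n hn)⟩
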